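/- Let P ∈ ℝ^{m×n} be a row stochastic matrix with minimum entry ν = min_{x,y} P(x,y), and let q = m ≥ 2. If 0 ≤ δ ≤ ν / (1 - ν + ν/(q-1)), then there exists a row stochastic matrix Q ∈ ℝ^{q×n} such that P = S_δ · Q, i.e., P is a degraded version of the q-ary symmetric channel with parameter δ. -/

import Mathlib

/-- A matrix is row stochastic if all entries are nonnegative and each row sums to 1. -/
def RowStochastic {X Z : Type*} [Fintype Z] (A : X → Z → ℝ) : Prop :=
  (∀ x z, 0 ≤ A x z) ∧ ∀ x, ∑ z, A x z = 1

/-- The q-ary symmetric channel matrix. -/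
noncomputable def symCh (q : ℕ) (δ : ℝ) : Matrix (Fin q) (Fin q) ℝ :=
  Matrix.of fun i j => if i = j then 1 - δ else δ / (q - 1)

lemma symCh_sum {q : ℕ} (hq : 2 ≤ q) (δ : ℝ) (x : Fin q) (f : Fin q → ℝ) :
    ∑ j, symCh q δ x j * f j
      = (1 - δ * q / ((q : ℝ) - 1)) * f x + (δ / ((q : ℝ) - 1)) * ∑ j, f j := by
  have hq2 : (2:ℝ) ≤ (q:ℝ) := by exact_mod_cast hq
  have hk : ((q:ℝ) - 1) ≠ 0 := by linarith
  have step : ∀ j, symCh q δ x j * f j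
      = (if x = j then (1 - δ - δ / ((q:ℝ)-1)) * f j else 0) + (δ / ((q:ℝ)-1)) * f j := by
    intro j
    simp only [symCh, Matrix.of_apply]
    split_ifs with h
    · ring
    · ring
  rw [Finset.sum_congr rfl fun j _ => step j, Finset.sum_add_distrib,
    Finset.sum_ite_eq Finset.univ x (fun j => (1 - δ - δ / ((q:ℝ)-1)) * f j)]
  simp only [Finset.mem_univ, if_true, ← Finset.mul_sum]
  have : 1 - δ - δ / ((q:ℝ)-1) = 1 - δ * q / ((q:ℝ)-1) := by field_simp; ring
  rw [this]

set_option maxHeartbeats 1000000 in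
/-- Degradation by symmetric channels: if `P` is a row stochastic `q × n` matrix with
minimum entry `ν` and `0 ≤ δ ≤ ν/(1 - ν + ν/(q-1))`, then `P` is a degraded version of the
q-ary symmetric channel with parameter `δ`, i.e., `P = S_δ · Q` for a row stochastic `Q`. -/
theorem degradation_by_symmetric_channels {q n : ℕ} (hq : 2 ≤ q)
    (P : Matrix (Fin q) (Fin n) ℝ) (hP : RowStochastic P) (ν : ℝ)
    (hν_le : ∀ x y, ν ≤ P x y) (hν_attained : ∃ x y, P x y = ν)
    (δ : ℝ) (hδ0 : 0 ≤ δ) (hδ : δ ≤ ν / (1 - ν + ν / ((q : ℝ) - 1))) :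
    ∃ Q : Matrix (Fin q) (Fin n) ℝ, RowStochastic Q ∧ P = symCh q δ * Q := by
  obtain ⟨hPnn, hPsum⟩ := hP
  have hq2 : (2:ℝ) ≤ (q:ℝ) := by exact_mod_cast hq
  have hk1 : (1:ℝ) ≤ (q:ℝ) - 1 := by linarith
  have hkpos : (0:ℝ) < (q:ℝ) - 1 := by linarith
  have hk0 : ((q:ℝ) - 1) ≠ 0 := ne_of_gt hkpos
  have x0 : Fin q := ⟨0, by omega⟩
  -- n ≠ 0
  rcases Nat.eq_zero_or_pos n with hn0 | hn1
  · exfalso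
    have := hPsum x0
    subst hn0
    simp at this
  -- ν ≥ 0
  obtain ⟨x₀, y₀, hxy⟩ := hν_attained
  have hν0 : 0 ≤ ν := hxy ▸ hPnn x₀ y₀
  -- n * ν ≤ 1
  have hνn : (n:ℝ) * ν ≤ 1 := by
    calc (n:ℝ) * ν = ∑ _y : Fin n, ν := by simp [mul_comm]
    _ ≤ ∑ y, P x0 y := Finset.sum_le_sum fun y _ => hν_le x0 y
    _ = 1 := hPsum x0
  -- case n = 1
  rcases eq_or_lt_of_le (Nat.succ_le_of_lt hn1 : 1 ≤ n) with hn1' | hn2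
  · -- n = 1
    have hn : n = 1 := hn1'.symm
    subst hn
    refine ⟨fun _ _ => 1, ⟨fun _ _ => zero_le_one, fun x => by simp⟩, ?_⟩
    ext x y
    have hP1 : P x y = 1 := by
      have := hPsum x
      have hy : y = 0 := Subsingleton.elim y 0
      simpa [hy] using this
    erw [Matrix.mul_apply, symCh_sum hq]
    simp only [hP1]
    have : ∑ _j : Fin q, (1:ℝ) = (q:ℝ) := by simp
    rw [this]
    field_simp
    ring
  -- now n ≥ 2
  have hn2'' : 2 ≤ n := hn2
  have hn2' : (2:ℝ) ≤ (n:ℝ) := by exact_mod_cast hn2''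
  have hνhalf : ν ≤ 1/2 := by nlinarith
  -- denominator positivity and the key inequality
  have hD : 0 < 1 - ν + ν / ((q:ℝ) - 1) := by
    have : 0 ≤ ν / ((q:ℝ) - 1) := div_nonneg hν0 hkpos.le
    linarith
  have hδD : δ * (1 - ν + ν / ((q:ℝ) - 1)) ≤ ν := (le_div_iff₀ hD).mp hδ
  -- key inequality: δ * (1 - ν) ≤ ν * (1 - δ/(q-1))
  have hkey : δ * (1 - ν) ≤ ν * (1 - δ / ((q:ℝ) - 1)) := by
    have h : δ * (ν / ((q:ℝ)-1)) = (δ / ((q:ℝ)-1)) * ν := by ring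
    nlinarith [hδD]
  have hD' : 0 < ((q:ℝ)-1) * (1 - ν) + ν := by nlinarith
  have h1 : δ * (((q:ℝ)-1) * (1 - ν) + ν) ≤ ν * ((q:ℝ)-1) := by
    have he : (1 - ν + ν / ((q:ℝ)-1)) * ((q:ℝ)-1) = ((q:ℝ)-1) * (1 - ν) + ν := by
      field_simp
    calc δ * (((q:ℝ)-1) * (1 - ν) + ν) = δ * ((1 - ν + ν / ((q:ℝ)-1)) * ((q:ℝ)-1)) := by
          rw [he]
    _ = δ * (1 - ν + ν / ((q:ℝ)-1)) * ((q:ℝ)-1) := by ring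
    _ ≤ ν * ((q:ℝ)-1) := mul_le_mul_of_nonneg_right hδD hkpos.le
  -- 0 ≤ c where c = 1 - δ q/(q-1), equivalently δ q ≤ q - 1
  have hδq : δ * (q:ℝ) ≤ (q:ℝ) - 1 := by
    nlinarith [mul_le_mul_of_nonneg_left h1 (by linarith : (0:ℝ) ≤ (q:ℝ)),
      mul_nonneg (mul_nonneg hkpos.le hkpos.le) (by linarith : (0:ℝ) ≤ 1 - 2*ν), hD']
  have hc0 : 0 ≤ 1 - δ * (q:ℝ) / ((q:ℝ)-1) := by
    rw [sub_nonneg, div_le_one hkpos]; exact hδq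
  -- each entry is at most 1 - ν
  have hentry : ∀ (i : Fin q) (y : Fin n), P i y ≤ 1 - ν := by
    intro i y
    have : Nontrivial (Fin n) := Fin.nontrivial_iff_two_le.mpr hn2''
    obtain ⟨y', hy'⟩ := exists_ne y
    have hsub : ({y, y'} : Finset (Fin n)) ⊆ Finset.univ := Finset.subset_univ _
    have hsum2 : P i y + P i y' ≤ ∑ z, P i z := by
      have := Finset.sum_le_sum_of_subset_of_nonneg hsub (fun z _ _ => hPnn i z)
      rwa [Finset.sum_pair (Ne.symm hy')] at this
    have := hν_le i y'
    have := hPsum i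
    linarith
  -- column sums are at most P x y + (q-1)(1-ν)
  have hcolsum : ∀ (x : Fin q) (y : Fin n), ∑ i, P i y ≤ P x y + ((q:ℝ)-1) * (1 - ν) := by
    intro x y
    have hmem : x ∈ (Finset.univ : Finset (Fin q)) := Finset.mem_univ x
    have hsplit : P x y + ∑ i ∈ Finset.univ.erase x, P i y = ∑ i, P i y :=
      Finset.add_sum_erase _ (fun i => P i y) hmem
    have hcard : ((Finset.univ : Finset (Fin q)).erase x).card = q - 1 := by
      rw [Finset.card_erase_of_mem hmem, Finset.card_univ, Fintype.card_fin]
    have hb : ∑ i ∈ Finset.univ.erase x, P i y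
        ≤ ((Finset.univ : Finset (Fin q)).erase x).card • (1 - ν) :=
      Finset.sum_le_card_nsmul _ _ _ (fun i _ => hentry i y)
    rw [hcard] at hb
    have hcast : ((q - 1 : ℕ) : ℝ) = (q:ℝ) - 1 := by
      have : 1 ≤ q := by omega
      push_cast [this]; ring
    rw [nsmul_eq_mul, hcast] at hb
    linarith
  -- split on whether c = 0 or c > 0
  rcases eq_or_lt_of_le hc0 with hceq | hcpos
  · -- degenerate case: δ q = q - 1, forcing ν = 1/2, n = 2, P ≡ 1/2
    have hδqe : δ * (q:ℝ) = (q:ℝ) - 1 := by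
      have : δ * (q:ℝ) / ((q:ℝ)-1) = 1 := by linarith [hceq]
      field_simp at this
      linarith
    have hν12 : ν = 1/2 := by
      refine le_antisymm hνhalf ?_
      nlinarith [mul_le_mul_of_nonneg_left h1 (by linarith : (0:ℝ) ≤ (q:ℝ)), hδqe,
        mul_pos hkpos hkpos, hν0]
    have hn2eq : n = 2 := by
      rw [hν12] at hνn
      have : (n:ℝ) ≤ 2 := by linarith
      have : n ≤ 2 := by exact_mod_cast this
      omega
    subst hn2eq
    have hhalf : ∀ (x : Fin q) (y : Fin 2), P x y = 1/2 := by
      intro x y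
      have hs := hPsum x
      rw [Fin.sum_univ_two] at hs
      have h0 := hν_le x 0
      have h1' := hν_le x 1
      rw [hν12] at h0 h1'
      fin_cases y
      · have : P x 0 = 1/2 := by linarith
        simpa using this
      · have : P x 1 = 1/2 := by linarith
        simpa using this
    refine ⟨P, ⟨hPnn, hPsum⟩, ?_⟩
    ext x y
    rw [Matrix.mul_apply, symCh_sum hq]
    have hcs : ∑ j, P j y = (q:ℝ) / 2 := by
      rw [Finset.sum_congr rfl fun j _ => hhalf j y, Finset.sum_const, Finset.card_univ,
        Fintype.card_fin, nsmul_eq_mul]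
      ring
    rw [hcs, hhalf x y]
    field_simp
    ring
  · -- main case: c > 0, take Q x y = (P x y - b * colsum y) / c
    obtain ⟨b, hb_def⟩ : ∃ b : ℝ, b = δ / ((q:ℝ)-1) := ⟨_, rfl⟩
    obtain ⟨c, hc_def⟩ : ∃ c : ℝ, c = 1 - δ * (q:ℝ) / ((q:ℝ)-1) := ⟨_, rfl⟩
    rw [← hc_def] at hcpos
    have hb0 : 0 ≤ b := hb_def ▸ div_nonneg hδ0 hkpos.le
    have hbk : b * ((q:ℝ)-1) = δ := by rw [hb_def]; field_simp
    have hδk : δ ≤ (q:ℝ) - 1 := by nlinarith [hδq, mul_nonneg hδ0 (by linarith : (0:ℝ) ≤ (q:ℝ) - 1)]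
    have hb1 : b ≤ 1 := by
      rw [hb_def, div_le_one hkpos]
      exact hδk
    have hbqc : 1 - b * (q:ℝ) = c := by rw [hb_def, hc_def]; field_simp
    refine ⟨Matrix.of fun x y => (P x y - b * ∑ i, P i y) / c, ⟨?_, ?_⟩, ?_⟩
    · -- nonnegativity
      intro x y
      simp only [Matrix.of_apply]
      apply div_nonneg _ hcpos.le
      have h2 := hcolsum x y
      have h3 := hν_le x y
      nlinarith [mul_le_mul_of_nonneg_left h2 hb0, hkey,
        mul_nonneg (sub_nonneg.mpr h3) (by linarith : (0:ℝ) ≤ 1 - b)]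
    · -- row sums
      intro x
      simp only [Matrix.of_apply]
      rw [← Finset.sum_div]
      have hdouble : ∑ y : Fin n, ∑ i, P i y = (q:ℝ) := by
        rw [Finset.sum_comm]
        simp [hPsum]
      have : ∑ y, (P x y - b * ∑ i, P i y) = 1 - b * (q:ℝ) := by
        rw [Finset.sum_sub_distrib, ← Finset.mul_sum, hdouble, hPsum x]
      rw [this, hbqc, div_self hcpos.ne']
    · -- factorization
      ext x y
      rw [Matrix.mul_apply, symCh_sum hq]
      simp only [Matrix.of_apply]
      have hcsQ : ∑ j : Fin q, (P j y - b * ∑ i, P i y) / c = ∑ i, P i y := by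
        rw [← Finset.sum_div, Finset.sum_sub_distrib, Finset.sum_const, Finset.card_univ,
          Fintype.card_fin, nsmul_eq_mul]
        have : (∑ i, P i y) - (q:ℝ) * (b * ∑ i, P i y) = (∑ i, P i y) * c := by
          rw [← hbqc]; ring
        rw [this, mul_div_assoc, div_self hcpos.ne', mul_one]
      rw [hcsQ]
      have hcQ : (1 - δ * (q:ℝ) / ((q:ℝ)-1)) * ((P x y - b * ∑ i, P i y) / c)
          = P x y - b * ∑ i, P i y := by
        rw [← hc_def, mul_div_assoc']
        rw [mul_comm, mul_div_assoc, div_self hcpos.ne', mul_one]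
      rw [hcQ, ← hb_def]
      ring
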